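/- The function Λ_r is differentiable on (−∞,0), its derivative Λ_r′ is strictly increasing on (−∞,0), and lim_{λ→−∞} Λ_r′(λ) = 1 while lim_{λ→0−} Λ_r′(λ) = +∞. -/

import Mathlib

open MeasureTheory ProbabilityTheory Filter Topology

/-- `φ(s) = q + ∑_{n≥0} p_n s^{n+1}`. -/
noncomputable def phi (q : ℝ) (p : ℕ → ℝ) (s : ℝ) : ℝ :=
  q + ∑' n : ℕ, p n * s ^ (n + 1)

/-- `φ'(s) = ∑_{n≥0} (n+1) p_n s^n`. -/
noncomputable def phiDeriv (p : ℕ → ℝ) (s : ℝ) : ℝ :=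
  ∑' n : ℕ, (n + 1 : ℝ) * p n * s ^ n

/-- `h s` is the minimal nonnegative solution `x ∈ [0,1]` of `x = s * φ x`, for every
`s ∈ [0,1]`. -/
def IsMinimalSolution (φ : ℝ → ℝ) (h : ℝ → ℝ) : Prop :=
  ∀ s ∈ Set.Icc (0 : ℝ) 1, h s ∈ Set.Icc (0 : ℝ) 1 ∧ h s = s * φ (h s) ∧
    ∀ y ∈ Set.Icc (0 : ℝ) 1, y = s * φ y → h s ≤ y

/-- `Λ_r(λ) = ln(1 + q e^λ − q e^λ / h(e^λ))` for `λ < 0`, and `Λ_r(0) = 0`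
(also on `λ > 0`, which is irrelevant). -/
noncomputable def LambdaR (q : ℝ) (h : ℝ → ℝ) (l : ℝ) : ℝ :=
  if l < 0 then Real.log (1 + q * Real.exp l - q * Real.exp l / h (Real.exp l)) else 0

/-- `Λ_r*(x) = sup_{λ ≤ 0} (xλ − Λ_r(λ))`, as an extended real number. -/
noncomputable def LambdaRStar (q : ℝ) (h : ℝ → ℝ) (x : ℝ) : EReal :=
  ⨆ l ∈ Set.Iic (0 : ℝ), ((x * l - LambdaR q h l : ℝ) : EReal)

set_option maxHeartbeats 1000000

namespace LamAux

/-- All standing hypotheses bundled. -/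
structure Hyp (q : ℝ) (p : ℕ → ℝ) : Prop where
  hq : 0 < q
  hp : ∀ n, 0 ≤ p n
  hpsum : Summable p
  htotal : q + ∑' n : ℕ, p n = 1
  hp0 : p 0 < 1
  hmoment : Summable (fun n : ℕ => (n + 1 : ℝ) * p n)
  hcrit : ∑' n : ℕ, (n + 1 : ℝ) * p n = 1

noncomputable def Af (q : ℝ) (p : ℕ → ℝ) (x : ℝ) : ℝ := q + ∑' n : ℕ, p n * x ^ n
noncomputable def Bf (p : ℕ → ℝ) (x : ℝ) : ℝ := ∑' n : ℕ, (n : ℝ) * p n * x ^ n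

variable {q : ℝ} {p : ℕ → ℝ}

lemma p_le_one (H : Hyp q p) : ∀ n, p n ≤ 1 := by
  intro n
  have h2 := Summable.le_tsum H.hmoment n (fun m _ => mul_nonneg (by positivity) (H.hp m))
  rw [H.hcrit] at h2
  nlinarith [H.hp n, (Nat.cast_nonneg n : (0:ℝ) ≤ n)]

lemma summable_npn (H : Hyp q p) : Summable (fun n : ℕ => (n : ℝ) * p n) := by
  have h : (fun n : ℕ => (n : ℝ) * p n) = fun n : ℕ => ((n : ℝ) + 1) * p n - p n := by
    funext n; ring
  rw [h]; exact H.hmoment.sub H.hpsum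

lemma tsum_pn (H : Hyp q p) : ∑' n : ℕ, p n = 1 - q := by linarith [H.htotal]

lemma tsum_npn (H : Hyp q p) : ∑' n : ℕ, (n : ℝ) * p n = q := by
  have h : (fun n : ℕ => (n : ℝ) * p n) = fun n : ℕ => ((n : ℝ) + 1) * p n - p n := by
    funext n; ring
  rw [h, Summable.tsum_sub H.hmoment H.hpsum, H.hcrit, tsum_pn H]
  ring

lemma summable_pxn (H : Hyp q p) {x : ℝ} (hx : |x| ≤ 1) :
    Summable (fun n : ℕ => p n * x ^ n) := by
  apply Summable.of_norm_bounded H.hpsum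
  intro n
  rw [norm_mul, norm_pow, Real.norm_eq_abs, Real.norm_eq_abs, abs_of_nonneg (H.hp n)]
  nlinarith [(pow_le_one₀ (abs_nonneg x) hx : |x| ^ n ≤ 1), H.hp n, pow_nonneg (abs_nonneg x) n]

lemma summable_npxn (H : Hyp q p) {x : ℝ} (hx : |x| ≤ 1) :
    Summable (fun n : ℕ => (n : ℝ) * p n * x ^ n) := by
  apply Summable.of_norm_bounded (summable_npn H)
  intro n
  rw [norm_mul, norm_mul, norm_pow, Real.norm_eq_abs, Real.norm_eq_abs, Real.norm_eq_abs,
    abs_of_nonneg (H.hp n), Nat.abs_cast]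
  nlinarith [(pow_le_one₀ (abs_nonneg x) hx : |x| ^ n ≤ 1), H.hp n, pow_nonneg (abs_nonneg x) n,
    (Nat.cast_nonneg n : (0:ℝ) ≤ n), mul_nonneg (Nat.cast_nonneg n : (0:ℝ) ≤ n) (H.hp n)]

lemma Af_one (H : Hyp q p) : Af q p 1 = 1 := by
  simp only [Af, one_pow, mul_one, tsum_pn H]; ring

lemma Bf_one (H : Hyp q p) : Bf p 1 = q := by
  simp only [Bf, one_pow, mul_one]; exact tsum_npn H

lemma Af_ge (H : Hyp q p) (x : ℝ) (hx : 0 ≤ x) : q ≤ Af q p x := by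
  have : 0 ≤ ∑' n : ℕ, p n * x ^ n :=
    tsum_nonneg fun n => mul_nonneg (H.hp n) (pow_nonneg hx n)
  simp only [Af]; linarith

lemma Af_pos (H : Hyp q p) (x : ℝ) (hx : 0 ≤ x) : 0 < Af q p x :=
  lt_of_lt_of_le H.hq (Af_ge H x hx)

lemma Af_mono (H : Hyp q p) {x y : ℝ} (hx : 0 ≤ x) (hxy : x ≤ y) (hy : y ≤ 1) :
    Af q p x ≤ Af q p y := by
  have hax : |x| ≤ 1 := by rw [abs_of_nonneg hx]; linarith
  have hay : |y| ≤ 1 := by rw [abs_of_nonneg (hx.trans hxy)]; linarith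
  have h1 : ∀ n : ℕ, p n * x ^ n ≤ p n * y ^ n := fun n => by
    have := pow_le_pow_left₀ hx hxy n
    nlinarith [H.hp n]
  have := Summable.tsum_le_tsum h1 (summable_pxn H hax) (summable_pxn H hay)
  simp only [Af]; linarith

lemma Bf_nonneg (H : Hyp q p) (x : ℝ) (hx : 0 ≤ x) : 0 ≤ Bf p x :=
  tsum_nonneg fun n => mul_nonneg (mul_nonneg (Nat.cast_nonneg n) (H.hp n)) (pow_nonneg hx n)

lemma Bf_mono (H : Hyp q p) {x y : ℝ} (hx : 0 ≤ x) (hxy : x ≤ y) (hy : y ≤ 1) :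
    Bf p x ≤ Bf p y := by
  have hax : |x| ≤ 1 := by rw [abs_of_nonneg hx]; linarith
  have hay : |y| ≤ 1 := by rw [abs_of_nonneg (hx.trans hxy)]; linarith
  have h1 : ∀ n : ℕ, (n : ℝ) * p n * x ^ n ≤ (n : ℝ) * p n * y ^ n := fun n => by
    have := pow_le_pow_left₀ hx hxy n
    nlinarith [H.hp n, (Nat.cast_nonneg n : (0:ℝ) ≤ n),
      mul_nonneg (Nat.cast_nonneg n : (0:ℝ) ≤ n) (H.hp n)]
  exact Summable.tsum_le_tsum h1 (summable_npxn H hax) (summable_npxn H hay)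

lemma exists_pm (H : Hyp q p) : ∃ m : ℕ, 1 ≤ m ∧ 0 < p m := by
  by_contra hc
  push_neg at hc
  have hz : ∀ m : ℕ, 1 ≤ m → p m = 0 := fun m hm => le_antisymm (by linarith [hc m hm]) (H.hp m)
  have h : ∑' n : ℕ, ((n : ℝ) + 1) * p n = p 0 := by
    rw [tsum_eq_single 0]
    · norm_num
    · intro b hb
      rw [hz b (Nat.one_le_iff_ne_zero.mpr hb)]; ring
  rw [H.hcrit] at h
  linarith [H.hp0]

lemma Bf_strict (H : Hyp q p) {x y : ℝ} (hx : 0 ≤ x) (hxy : x < y) (hy : y ≤ 1) :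
    Bf p x < Bf p y := by
  have hax : |x| ≤ 1 := by rw [abs_of_nonneg hx]; linarith
  have hay : |y| ≤ 1 := by rw [abs_of_nonneg (hx.trans hxy.le)]; linarith
  obtain ⟨m, hm1, hmpos⟩ := exists_pm H
  have h1 : ∀ n : ℕ, (n : ℝ) * p n * x ^ n ≤ (n : ℝ) * p n * y ^ n := fun n => by
    have := pow_le_pow_left₀ hx hxy.le n
    nlinarith [H.hp n, (Nat.cast_nonneg n : (0:ℝ) ≤ n),
      mul_nonneg (Nat.cast_nonneg n : (0:ℝ) ≤ n) (H.hp n)]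
  have hi : (m : ℝ) * p m * x ^ m < (m : ℝ) * p m * y ^ m := by
    have hpow : x ^ m < y ^ m := pow_lt_pow_left₀ hxy hx (by omega)
    have hmr : (1:ℝ) ≤ (m:ℝ) := by exact_mod_cast hm1
    have hc : (0:ℝ) < (m:ℝ) * p m := mul_pos (by linarith) hmpos
    exact mul_lt_mul_of_pos_left hpow hc
  exact Summable.tsum_lt_tsum h1 hi (summable_npxn H hax) (summable_npxn H hay)

lemma Bf_zero : Bf p 0 = 0 := by
  simp only [Bf]
  rw [tsum_eq_single 0]
  · simp
  · intro b hb
    rw [zero_pow hb]; ring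

lemma Bf_lt_q (H : Hyp q p) {x : ℝ} (hx : 0 ≤ x) (hx1 : x < 1) : Bf p x < q := by
  have := Bf_strict H hx hx1 le_rfl
  rwa [Bf_one H] at this

lemma Bf_pos (H : Hyp q p) {x : ℝ} (hx : 0 < x) (hx1 : x ≤ 1) : 0 < Bf p x := by
  have := Bf_strict H le_rfl hx hx1
  rwa [Bf_zero] at this

lemma Af_le_one (H : Hyp q p) {x : ℝ} (hx : 0 ≤ x) (hx1 : x ≤ 1) : Af q p x ≤ 1 := by
  have := Af_mono H hx hx1 le_rfl
  rwa [Af_one H] at this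

lemma Bf_le_qx (H : Hyp q p) {x : ℝ} (hx : 0 ≤ x) (hx1 : x ≤ 1) : Bf p x ≤ q * x := by
  have hax : |x| ≤ 1 := by rw [abs_of_nonneg hx]; linarith
  have h1 : ∀ n : ℕ, (n : ℝ) * p n * x ^ n ≤ ((n : ℝ) * p n) * x := by
    intro n
    match n with
    | 0 => simp
    | Nat.succ k =>
      have hxx : x ^ (k + 1) ≤ x := by
        calc x ^ (k+1) = x ^ k * x := by ring
        _ ≤ 1 * x := by nlinarith [pow_le_one₀ hx hx1 (n := k), pow_nonneg hx k]
        _ = x := by ring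
      have hnn : (0:ℝ) ≤ ((k:ℝ)+1) * p (k+1) := mul_nonneg (by positivity) (H.hp _)
      have h2 := mul_le_mul_of_nonneg_left hxx hnn
      push_cast
      calc ((k:ℝ)+1) * p (k+1) * x ^ (k+1) = (((k:ℝ)+1) * p (k+1)) * x ^ (k+1) := by ring
      _ ≤ (((k:ℝ)+1) * p (k+1)) * x := h2
      _ = ((k:ℝ)+1) * p (k+1) * x := by ring
  have h2 := Summable.tsum_le_tsum h1 (summable_npxn H hax) ((summable_npn H).mul_right x)
  rw [tsum_mul_right, tsum_npn H] at h2
  exact h2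

lemma hasDerivAt_series (c : ℕ → ℝ) (hc : ∀ n, |c n| ≤ 1) (x : ℝ) (hx : |x| < 1) :
    HasDerivAt (fun y : ℝ => ∑' n : ℕ, c n * y ^ n)
      (∑' n : ℕ, c n * ((n : ℝ) * x ^ (n - 1))) x := by
  set r : ℝ := (1 + |x|) / 2 with hr
  have hr0 : 0 ≤ r := by positivity
  have hxr : |x| < r := by rw [hr]; linarith
  have hr1 : r < 1 := by rw [hr]; linarith
  have hu : Summable (fun n : ℕ => (n : ℝ) * r ^ (n - 1)) := by
    have h1 : Summable (fun n : ℕ => ((n : ℝ) + 1) * r ^ n) := by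
      have h2 := summable_pow_mul_geometric_of_norm_lt_one 1 (by rwa [Real.norm_eq_abs, abs_of_nonneg hr0] : ‖r‖ < 1)
      have h3 : Summable (fun n : ℕ => r ^ n) := summable_geometric_of_lt_one hr0 hr1
      have := h2.add h3
      apply this.congr
      intro n; push_cast; ring
    exact (summable_nat_add_iff 1).mp (by
      apply h1.congr
      intro n
      simp)
  apply hasDerivAt_tsum_of_isPreconnected hu (Metric.isOpen_ball (x := (0:ℝ)) (ε := r))
    (convex_ball (0:ℝ) r).isPreconnected
    (g := fun (n : ℕ) (y : ℝ) => c n * y ^ n)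
    (g' := fun (n : ℕ) (y : ℝ) => c n * ((n:ℝ) * y ^ (n - 1)))
    (y₀ := 0)
  · intro n y hy
    exact (hasDerivAt_pow n y).const_mul (c n)
  · intro n y hy
    rw [Metric.mem_ball, dist_zero_right, Real.norm_eq_abs] at hy
    rw [Real.norm_eq_abs, abs_mul, abs_mul, Nat.abs_cast, abs_pow]
    have h4 : |y| ^ (n-1) ≤ r ^ (n-1) := pow_le_pow_left₀ (abs_nonneg y) hy.le _
    calc |c n| * ((n:ℝ) * |y| ^ (n-1)) ≤ 1 * ((n:ℝ) * |y| ^ (n-1)) :=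
          mul_le_mul_of_nonneg_right (hc n) (by positivity)
    _ = (n:ℝ) * |y| ^ (n-1) := by ring
    _ ≤ (n:ℝ) * r ^ (n-1) := mul_le_mul_of_nonneg_left h4 (Nat.cast_nonneg n)
  · rw [Metric.mem_ball, dist_zero_right]; simpa using lt_of_le_of_lt (abs_nonneg x) hxr
  · apply Summable.of_norm_bounded (summable_geometric_of_lt_one hr0 hr1)
    intro n
    rw [Real.norm_eq_abs, abs_mul, abs_pow, abs_zero]
    match n with
    | 0 => simpa using hc 0
    | Nat.succ k => simp [pow_succ]; positivity
  · rwa [Metric.mem_ball, dist_zero_right, Real.norm_eq_abs]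


noncomputable def CA (p : ℕ → ℝ) (x : ℝ) : ℝ := ∑' n : ℕ, p n * ((n : ℝ) * x ^ (n - 1))

lemma hasDerivAt_Af (H : Hyp q p) {x : ℝ} (hx : |x| < 1) :
    HasDerivAt (Af q p) (CA p x) x := by
  have hc : ∀ n, |p n| ≤ 1 := fun n => by
    rw [abs_of_nonneg (H.hp n)]; exact p_le_one H n
  have := (hasDerivAt_series p hc x hx).const_add q
  exact this

lemma x_mul_CA (p : ℕ → ℝ) (x : ℝ) : x * CA p x = Bf p x := by
  rw [CA, ← tsum_mul_left]
  apply tsum_congr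
  intro n
  match n with
  | 0 => simp
  | Nat.succ k => rw [pow_succ]; push_cast; ring

lemma phi_eq (q : ℝ) (p : ℕ → ℝ) (x : ℝ) : phi q p x = q * (1 - x) + x * Af q p x := by
  have h1 : ∀ n : ℕ, p n * x ^ (n + 1) = x * (p n * x ^ n) := fun n => by ring
  rw [phi, tsum_congr h1, tsum_mul_left, Af]
  ring

lemma phi_ge (H : Hyp q p) {x : ℝ} (hx : 0 ≤ x) : q ≤ phi q p x := by
  have : 0 ≤ ∑' n : ℕ, p n * x ^ (n+1) :=
    tsum_nonneg fun n => mul_nonneg (H.hp n) (pow_nonneg hx _)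
  rw [phi]; linarith

lemma phi_pos (H : Hyp q p) {x : ℝ} (hx : 0 ≤ x) : 0 < phi q p x :=
  lt_of_lt_of_le H.hq (phi_ge H hx)

lemma q_le_one (H : Hyp q p) : q ≤ 1 := by
  have : 0 ≤ ∑' n : ℕ, p n := tsum_nonneg fun n => H.hp n
  linarith [H.htotal]

lemma phi_le_one (H : Hyp q p) {x : ℝ} (hx : 0 ≤ x) (hx1 : x ≤ 1) : phi q p x ≤ 1 := by
  rw [phi_eq]
  have hA := Af_le_one H hx hx1
  have hA0 := Af_pos H x hx
  nlinarith [H.hq, q_le_one H]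

lemma phi_one (H : Hyp q p) : phi q p 1 = 1 := by
  rw [phi_eq, Af_one H]; ring

lemma summable_pxn1 (H : Hyp q p) {x : ℝ} (hx : |x| ≤ 1) :
    Summable (fun n : ℕ => p n * x ^ (n+1)) := by
  apply Summable.of_norm_bounded H.hpsum
  intro n
  rw [norm_mul, norm_pow, Real.norm_eq_abs, Real.norm_eq_abs, abs_of_nonneg (H.hp n)]
  nlinarith [(pow_le_one₀ (abs_nonneg x) hx : |x| ^ (n+1) ≤ 1), H.hp n,
    pow_nonneg (abs_nonneg x) (n+1)]

lemma phi_mono (H : Hyp q p) {x y : ℝ} (hx : 0 ≤ x) (hxy : x ≤ y) (hy : y ≤ 1) :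
    phi q p x ≤ phi q p y := by
  have hax : |x| ≤ 1 := by rw [abs_of_nonneg hx]; linarith
  have hay : |y| ≤ 1 := by rw [abs_of_nonneg (hx.trans hxy)]; linarith
  have h1 : ∀ n : ℕ, p n * x ^ (n+1) ≤ p n * y ^ (n+1) := fun n => by
    have := pow_le_pow_left₀ hx hxy (n+1)
    nlinarith [H.hp n]
  have := Summable.tsum_le_tsum h1 (summable_pxn1 H hax) (summable_pxn1 H hay)
  rw [phi, phi]; linarith

lemma hasDerivAt_phi (H : Hyp q p) {x : ℝ} (hx : |x| < 1) :
    HasDerivAt (phi q p) (Af q p x - q + Bf p x) x := by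
  have hA := hasDerivAt_Af H hx
  have h1 : HasDerivAt (fun y : ℝ => q * (1 - y) + y * Af q p y)
      (q * (0 - 1) + (1 * Af q p x + x * CA p x)) x := by
    exact (((hasDerivAt_const x (1:ℝ)).sub (hasDerivAt_id x)).const_mul q).add
      ((hasDerivAt_id x).mul hA)
  have h2 : (fun y : ℝ => q * (1 - y) + y * Af q p y) = phi q p := by
    funext y; rw [phi_eq]
  rw [h2] at h1
  have h3 : q * (0 - 1) + (1 * Af q p x + x * CA p x) = Af q p x - q + Bf p x := by
    rw [x_mul_CA]; ring
  rwa [h3] at h1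

noncomputable def psi (q : ℝ) (p : ℕ → ℝ) (x : ℝ) : ℝ := x / phi q p x

lemma hasDerivAt_psi (H : Hyp q p) {x : ℝ} (hx : 0 ≤ x) (hx1 : x < 1) :
    HasDerivAt (psi q p) ((q - x * Bf p x) / (phi q p x) ^ 2) x := by
  have hax : |x| < 1 := by rw [abs_of_nonneg hx]; exact hx1
  have hphi := hasDerivAt_phi H hax
  have hne : phi q p x ≠ 0 := (phi_pos H hx).ne'
  have h1 := (hasDerivAt_id x).div hphi hne
  have h2 : (1 * phi q p x - x * (Af q p x - q + Bf p x)) / (phi q p x) ^ 2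
      = (q - x * Bf p x) / (phi q p x) ^ 2 := by
    congr 1
    rw [phi_eq]; ring
  simp only [id_eq] at h1
  rw [h2] at h1
  exact h1

lemma pow_sub_pow_le {x y : ℝ} (hx : 0 ≤ x) (hxy : x ≤ y) (hy : y ≤ 1) :
    ∀ n : ℕ, y ^ n - x ^ n ≤ n * (y - x) := by
  intro n
  induction n with
  | zero => simp
  | succ k ih =>
    have hyk : y ^ k ≤ 1 := pow_le_one₀ (hx.trans hxy) hy
    have hxk : x ^ k ≤ y ^ k := pow_le_pow_left₀ hx hxy k
    have : y ^ (k+1) - x ^ (k+1) = y * (y ^ k - x ^ k) + x ^ k * (y - x) := by ring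
    rw [this]
    push_cast
    nlinarith [pow_nonneg hx k, pow_nonneg (hx.trans hxy) k]

lemma psi_strict (H : Hyp q p) {x y : ℝ} (hx : 0 < x) (hxy : x < y) (hy : y ≤ 1) :
    psi q p x < psi q p y := by
  have hx1 : x < 1 := lt_of_lt_of_le hxy hy
  have hpx := phi_pos H hx.le
  have hpy := phi_pos H (by linarith : (0:ℝ) ≤ y)
  rw [psi, psi, div_lt_div_iff₀ hpx hpy]
  -- goal : x * phi q p y < y * phi q p x
  have hax : |x| ≤ 1 := by rw [abs_of_nonneg hx.le]; linarith
  have hay : |y| ≤ 1 := by rw [abs_of_nonneg (by linarith : (0:ℝ) ≤ y)]; linarith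
  -- termwise bound
  have h1 : ∀ n : ℕ, x * (p n * y ^ (n+1)) ≤ y * (p n * x ^ (n+1)) + ((n:ℝ) * p n) * (x * y * (y - x)) := by
    intro n
    have hkey : x * y ^ (n+1) - y * x ^ (n+1) = x * y * (y ^ n - x ^ n) := by ring
    have h2 : y ^ n - x ^ n ≤ n * (y - x) := pow_sub_pow_le hx.le hxy.le hy n
    nlinarith [H.hp n, mul_nonneg (mul_nonneg hx.le (by linarith : (0:ℝ) ≤ y)) (H.hp n),
      mul_le_mul_of_nonneg_left h2 (mul_nonneg (mul_nonneg hx.le (by linarith : (0:ℝ) ≤ y)) (H.hp n))]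
  have hs1 : Summable (fun n : ℕ => x * (p n * y ^ (n+1))) :=
    (summable_pxn1 H hay).mul_left x
  have hs2 : Summable (fun n : ℕ => y * (p n * x ^ (n+1)) + ((n:ℝ) * p n) * (x * y * (y - x))) :=
    ((summable_pxn1 H hax).mul_left y).add ((summable_npn H).mul_right _)
  have h3 := Summable.tsum_le_tsum h1 hs1 hs2
  rw [tsum_mul_left] at h3
  rw [Summable.tsum_add ((summable_pxn1 H hax).mul_left y) ((summable_npn H).mul_right _)] at h3
  rw [tsum_mul_left, tsum_mul_right, tsum_npn H] at h3
  -- h3 : x * ∑ p y^{n+1} ≤ y * ∑ p x^{n+1} + q * (x*y*(y-x))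
  have hxylt : x * y < 1 := by nlinarith
  have hq := H.hq
  rw [phi, phi]
  have key : 0 < q * (y - x) * (1 - x * y) :=
    mul_pos (mul_pos hq (by linarith)) (by linarith)
  nlinarith [h3, key]

lemma psi_mono (H : Hyp q p) {x y : ℝ} (hx : 0 < x) (hxy : x ≤ y) (hy : y ≤ 1) :
    psi q p x ≤ psi q p y := by
  rcases eq_or_lt_of_le hxy with rfl | hlt
  · exact le_rfl
  · exact (psi_strict H hx hlt hy).le


lemma psi_one (H : Hyp q p) : psi q p 1 = 1 := by
  rw [psi, phi_one H, div_one]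

variable {h : ℝ → ℝ}

lemma h_icc (hmin : IsMinimalSolution (phi q p) h) {s : ℝ} (hs0 : 0 ≤ s) (hs1 : s ≤ 1) :
    h s ∈ Set.Icc (0:ℝ) 1 := (hmin s ⟨hs0, hs1⟩).1

lemma h_fix (hmin : IsMinimalSolution (phi q p) h) {s : ℝ} (hs0 : 0 ≤ s) (hs1 : s ≤ 1) :
    h s = s * phi q p (h s) := (hmin s ⟨hs0, hs1⟩).2.1

lemma h_pos (H : Hyp q p) (hmin : IsMinimalSolution (phi q p) h) {s : ℝ}
    (hs0 : 0 < s) (hs1 : s ≤ 1) : 0 < h s := by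
  rw [h_fix hmin hs0.le hs1]
  exact mul_pos hs0 (phi_pos H (h_icc hmin hs0.le hs1).1)

lemma h_lt_one (H : Hyp q p) (hmin : IsMinimalSolution (phi q p) h) {s : ℝ}
    (hs0 : 0 < s) (hs1 : s < 1) : h s < 1 := by
  have hm := h_icc hmin hs0.le hs1.le
  calc h s = s * phi q p (h s) := h_fix hmin hs0.le hs1.le
  _ ≤ s * 1 := mul_le_mul_of_nonneg_left (phi_le_one H hm.1 hm.2) hs0.le
  _ = s := mul_one s
  _ < 1 := hs1

lemma psi_h (H : Hyp q p) (hmin : IsMinimalSolution (phi q p) h) {s : ℝ}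
    (hs0 : 0 < s) (hs1 : s ≤ 1) : psi q p (h s) = s := by
  have hm := h_icc hmin hs0.le hs1
  have hpne : phi q p (h s) ≠ 0 := (phi_pos H hm.1).ne'
  rw [psi, div_eq_iff hpne]
  exact h_fix hmin hs0.le hs1

lemma h_strict (H : Hyp q p) (hmin : IsMinimalSolution (phi q p) h) {s t : ℝ}
    (hs0 : 0 < s) (hst : s < t) (ht1 : t ≤ 1) : h s < h t := by
  by_contra hc
  push_neg at hc
  have hts : 0 < t := lt_trans hs0 hst
  have h1 : psi q p (h t) ≤ psi q p (h s) :=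
    psi_mono H (h_pos H hmin hts ht1) hc (h_icc hmin hs0.le (by linarith)).2
  rw [psi_h H hmin hs0 (by linarith), psi_h H hmin hts ht1] at h1
  linarith

lemma h_cont (H : Hyp q p) (hmin : IsMinimalSolution (phi q p) h) {s : ℝ}
    (hs0 : 0 < s) (hs1 : s < 1) : ContinuousAt h s := by
  rw [Metric.continuousAt_iff]
  intro ε hε
  set x := h s with hxdef
  have hx0 : 0 < x := h_pos H hmin hs0 hs1.le
  have hx1 : x < 1 := h_lt_one H hmin hs0 hs1
  set ε' := min (ε/2) (min (x/2) ((1-x)/2)) with hε'def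
  have he1 : ε' ≤ ε/2 := min_le_left _ _
  have he2 : ε' ≤ x/2 := (min_le_right _ _).trans (min_le_left _ _)
  have he3 : ε' ≤ (1-x)/2 := (min_le_right _ _).trans (min_le_right _ _)
  have hε'0 : 0 < ε' := lt_min (by linarith) (lt_min (by linarith) (by linarith))
  have hlo0 : 0 < x - ε' := by linarith
  have hhi1 : x + ε' < 1 := by linarith
  set lo := psi q p (x - ε') with hlodef
  set hi := psi q p (x + ε') with hhidef
  have hxs : psi q p x = s := psi_h H hmin hs0 hs1.le
  have hlo : lo < s := by
    rw [← hxs]; exact psi_strict H hlo0 (by linarith) hx1.le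
  have hhi : s < hi := by
    rw [← hxs]; exact psi_strict H hx0 (by linarith) hhi1.le
  have hlo_pos : 0 < lo := div_pos hlo0 (phi_pos H hlo0.le)
  have hhi_lt : hi < 1 := by
    have := psi_strict H (by linarith : (0:ℝ) < x + ε') hhi1 le_rfl
    rwa [psi_one H] at this
  refine ⟨min (s - lo) (hi - s), lt_min (by linarith) (by linarith), ?_⟩
  intro y hy
  rw [Real.dist_eq] at hy
  rw [Real.dist_eq]
  have hy' := abs_lt.mp hy
  have hylo : lo < y := by
    have := hy'.1
    have h2 : min (s - lo) (hi - s) ≤ s - lo := min_le_left _ _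
    linarith
  have hyhi : y < hi := by
    have := hy'.2
    have h2 : min (s - lo) (hi - s) ≤ hi - s := min_le_right _ _
    linarith
  have hy0 : 0 < y := lt_trans hlo_pos hylo
  have hy1 : y < 1 := lt_trans hyhi hhi_lt
  have hhy0 : 0 < h y := h_pos H hmin hy0 hy1.le
  have hhy1 : h y ≤ 1 := (h_icc hmin hy0.le hy1.le).2
  have hpy : psi q p (h y) = y := psi_h H hmin hy0 hy1.le
  have hub : h y < x + ε' := by
    by_contra hc
    push_neg at hc
    have := psi_mono H (by linarith : (0:ℝ) < x + ε') hc hhy1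
    rw [hpy] at this
    rw [hhidef] at hyhi
    linarith
  have hlb : x - ε' < h y := by
    by_contra hc
    push_neg at hc
    have := psi_mono H hhy0 hc (by linarith : x - ε' ≤ 1)
    rw [hpy] at this
    rw [hlodef] at hylo
    linarith
  rw [abs_lt]
  constructor <;> [linarith; linarith]

lemma qxB_pos (H : Hyp q p) {x : ℝ} (hx0 : 0 ≤ x) (hx1 : x < 1) : 0 < q - x * Bf p x := by
  have h1 : Bf p x < q := Bf_lt_q H hx0 hx1
  have h2 : 0 ≤ Bf p x := Bf_nonneg H x hx0
  nlinarith

lemma hasDerivAt_h (H : Hyp q p) (hmin : IsMinimalSolution (phi q p) h) {s : ℝ}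
    (hs0 : 0 < s) (hs1 : s < 1) :
    HasDerivAt h (((q - h s * Bf p (h s)) / (phi q p (h s)) ^ 2)⁻¹) s := by
  have hx0 : 0 < h s := h_pos H hmin hs0 hs1.le
  have hx1 : h s < 1 := h_lt_one H hmin hs0 hs1
  have hpsi := hasDerivAt_psi H hx0.le hx1
  refine HasDerivAt.of_local_left_inverse (h_cont H hmin hs0 hs1) hpsi ?_ ?_
  · exact (div_pos (qxB_pos H hx0.le hx1) (pow_pos (phi_pos H hx0.le) 2)).ne'
  · filter_upwards [isOpen_Ioo.mem_nhds (⟨hs0, hs1⟩ : s ∈ Set.Ioo 0 1)] with y hy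
    exact psi_h H hmin hy.1 hy.2.le


noncomputable def Df (q : ℝ) (p : ℕ → ℝ) (x : ℝ) : ℝ :=
  1 + phi q p x * Bf p x / (Af q p x * (q - x * Bf p x))

lemma log_arg_eq (H : Hyp q p) (hmin : IsMinimalSolution (phi q p) h) {t : ℝ} (ht : t < 0) :
    1 + q * Real.exp t - q * Real.exp t / h (Real.exp t)
      = h (Real.exp t) * Af q p (h (Real.exp t)) / phi q p (h (Real.exp t)) := by
  set s := Real.exp t with hsdef
  have hs0 : 0 < s := Real.exp_pos t
  have hs1 : s < 1 := Real.exp_lt_one_iff.mpr ht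
  set x := h s with hxdef
  have hx0 : 0 < x := h_pos H hmin hs0 hs1.le
  have hφ : 0 < phi q p x := phi_pos H hx0.le
  have hs_eq : s = x / phi q p x := (psi_h H hmin hs0 hs1.le).symm
  rw [hs_eq, phi_eq q p x]
  have hφ' : q * (1 - x) + x * Af q p x ≠ 0 := by rw [← phi_eq]; exact hφ.ne'
  field_simp
  ring

lemma hasDerivAt_LambdaR (H : Hyp q p) (hmin : IsMinimalSolution (phi q p) h) {l : ℝ}
    (hl : l < 0) : HasDerivAt (LambdaR q h) (Df q p (h (Real.exp l))) l := by
  set s := Real.exp l with hsdef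
  have hs0 : 0 < s := Real.exp_pos l
  have hs1 : s < 1 := Real.exp_lt_one_iff.mpr hl
  set x := h s with hxdef
  have hx0 : 0 < x := h_pos H hmin hs0 hs1.le
  have hx1 : x < 1 := h_lt_one H hmin hs0 hs1
  have hax : |x| < 1 := by rw [abs_of_nonneg hx0.le]; exact hx1
  have hφ : 0 < phi q p x := phi_pos H hx0.le
  have hA : 0 < Af q p x := Af_pos H x hx0.le
  have hqxB : 0 < q - x * Bf p x := qxB_pos H hx0.le hx1
  set dh : ℝ := ((q - x * Bf p x) / (phi q p x) ^ 2)⁻¹ * s with hdhdef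
  have hd : HasDerivAt (fun t : ℝ => h (Real.exp t)) dh l :=
    (hasDerivAt_h H hmin hs0 hs1).comp l (Real.hasDerivAt_exp l)
  have G1 : HasDerivAt (fun t : ℝ => Real.log (h (Real.exp t))) (x⁻¹ * dh) l :=
    by have := (Real.hasDerivAt_log hx0.ne').comp l hd; exact this
  have G2 : HasDerivAt (fun t : ℝ => Real.log (Af q p (h (Real.exp t))))
      ((Af q p x)⁻¹ * (CA p x * dh)) l :=
    by have := (Real.hasDerivAt_log hA.ne').comp l ((hasDerivAt_Af H hax).comp l hd); exact this
  have G3 : HasDerivAt (fun t : ℝ => Real.log (phi q p (h (Real.exp t))))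
      ((phi q p x)⁻¹ * ((Af q p x - q + Bf p x) * dh)) l :=
    by have := (Real.hasDerivAt_log hφ.ne').comp l ((hasDerivAt_phi H hax).comp l hd); exact this
  have total := (G1.add G2).sub G3
  have heq : LambdaR q h =ᶠ[𝓝 l] (fun t : ℝ =>
      Real.log (h (Real.exp t)) + Real.log (Af q p (h (Real.exp t)))
        - Real.log (phi q p (h (Real.exp t)))) := by
    filter_upwards [isOpen_Iio.mem_nhds (hl : l ∈ Set.Iio (0:ℝ))] with t ht
    have ht' : t < 0 := ht
    have hs0' : (0:ℝ) < Real.exp t := Real.exp_pos t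
    have hs1' : Real.exp t < 1 := Real.exp_lt_one_iff.mpr ht'
    have hx0' : 0 < h (Real.exp t) := h_pos H hmin hs0' hs1'.le
    have hA' : 0 < Af q p (h (Real.exp t)) := Af_pos H _ hx0'.le
    have hφ' : 0 < phi q p (h (Real.exp t)) := phi_pos H hx0'.le
    rw [LambdaR, if_pos ht', log_arg_eq H hmin ht',
      Real.log_div (mul_pos hx0' hA').ne' hφ'.ne', Real.log_mul hx0'.ne' hA'.ne']
  have final := total.congr_of_eventuallyEq heq
  have hval : x⁻¹ * dh + (Af q p x)⁻¹ * (CA p x * dh)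
      - (phi q p x)⁻¹ * ((Af q p x - q + Bf p x) * dh) = Df q p x := by
    have hCA : CA p x = Bf p x / x := by
      rw [← x_mul_CA p x]; field_simp
    have hs_eq : s = x / phi q p x := (psi_h H hmin hs0 hs1.le).symm
    rw [hdhdef, hCA, hs_eq, Df, phi_eq q p x]
    have hφ' : q * (1 - x) + x * Af q p x ≠ 0 := by rw [← phi_eq]; exact hφ.ne'
    have hqxB' : q - x * Bf p x ≠ 0 := hqxB.ne'
    field_simp
    ring
  rwa [hval] at final

lemma deriv_LambdaR (H : Hyp q p) (hmin : IsMinimalSolution (phi q p) h) {l : ℝ}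
    (hl : l < 0) : deriv (LambdaR q h) l = Df q p (h (Real.exp l)) :=
  (hasDerivAt_LambdaR H hmin hl).deriv


lemma pow_key {x y : ℝ} (hx : 0 ≤ x) (hxy : x ≤ y) {n m : ℕ} (hnm : n ≤ m) :
    (n:ℝ) * x^n * y^m + (m:ℝ) * x^m * y^n ≤ (n:ℝ) * y^n * x^m + (m:ℝ) * y^m * x^n := by
  obtain ⟨k, rfl⟩ := Nat.exists_eq_add_of_le hnm
  have hy : 0 ≤ y := hx.trans hxy
  have h1 : x ^ k ≤ y ^ k := pow_le_pow_left₀ hx hxy k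
  have hc : (0:ℝ) ≤ x ^ n * y ^ n := mul_nonneg (pow_nonneg hx n) (pow_nonneg hy n)
  have hk : (0:ℝ) ≤ (k:ℝ) := Nat.cast_nonneg k
  have hkey : 0 ≤ (x ^ n * y ^ n) * ((k:ℝ) * (y ^ k - x ^ k)) :=
    mul_nonneg hc (mul_nonneg hk (sub_nonneg.mpr h1))
  rw [pow_add, pow_add]
  push_cast
  nlinarith [hkey]

lemma pow_key' {x y : ℝ} (hx : 0 ≤ x) (hxy : x ≤ y) (n m : ℕ) :
    (n:ℝ) * x^n * y^m + (m:ℝ) * x^m * y^n ≤ (n:ℝ) * y^n * x^m + (m:ℝ) * y^m * x^n := by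
  rcases le_total n m with hnm | hmn
  · exact pow_key hx hxy hnm
  · have := pow_key hx hxy hmn
    linarith

lemma BA_core (H : Hyp q p) {x y : ℝ} (hx : 0 ≤ x) (hxy : x ≤ y) (hy : y ≤ 1) :
    Bf p x * (∑' n : ℕ, p n * y ^ n) ≤ Bf p y * (∑' n : ℕ, p n * x ^ n) := by
  have hax : |x| ≤ 1 := by rw [abs_of_nonneg hx]; linarith
  have hay : |y| ≤ 1 := by rw [abs_of_nonneg (hx.trans hxy)]; linarith
  have hy0 : 0 ≤ y := hx.trans hxy
  set f : ℕ × ℕ → ℝ := fun z => ((z.1 : ℝ) * p z.1 * x ^ z.1) * (p z.2 * y ^ z.2) with hfdef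
  set g : ℕ × ℕ → ℝ := fun z => ((z.1 : ℝ) * p z.1 * y ^ z.1) * (p z.2 * x ^ z.2) with hgdef
  have hf : Summable f :=
    (summable_npxn H hax).mul_of_nonneg (summable_pxn H hay)
      (fun n => mul_nonneg (mul_nonneg (Nat.cast_nonneg n) (H.hp n)) (pow_nonneg hx n))
      (fun n => mul_nonneg (H.hp n) (pow_nonneg hy0 n))
  have hg : Summable g :=
    (summable_npxn H hay).mul_of_nonneg (summable_pxn H hax)
      (fun n => mul_nonneg (mul_nonneg (Nat.cast_nonneg n) (H.hp n)) (pow_nonneg hy0 n))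
      (fun n => mul_nonneg (H.hp n) (pow_nonneg hx n))
  have hfs : Summable (fun z : ℕ × ℕ => f z.swap) := hf.comp_injective Prod.swap_injective
  have hgs : Summable (fun z : ℕ × ℕ => g z.swap) := hg.comp_injective Prod.swap_injective
  have hswapf : ∑' z : ℕ × ℕ, f z.swap = ∑' z : ℕ × ℕ, f z :=
    (Equiv.prodComm ℕ ℕ).tsum_eq f
  have hswapg : ∑' z : ℕ × ℕ, g z.swap = ∑' z : ℕ × ℕ, g z :=
    (Equiv.prodComm ℕ ℕ).tsum_eq g
  have hkey : ∀ z : ℕ × ℕ, f z + f z.swap ≤ g z + g z.swap := by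
    rintro ⟨n, m⟩
    have hpnm : (0:ℝ) ≤ p n * p m := mul_nonneg (H.hp n) (H.hp m)
    have := mul_le_mul_of_nonneg_left (pow_key' hx hxy n m) hpnm
    simp only [hfdef, hgdef, Prod.swap]
    nlinarith [this]
  have h2 := Summable.tsum_le_tsum hkey (hf.add hfs) (hg.add hgs)
  rw [Summable.tsum_add hf hfs, Summable.tsum_add hg hgs, hswapf, hswapg] at h2
  have hfeq : Bf p x * (∑' n : ℕ, p n * y ^ n) = ∑' z : ℕ × ℕ, f z :=
    Summable.tsum_mul_tsum (summable_npxn H hax) (summable_pxn H hay) hf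
  have hgeq : Bf p y * (∑' n : ℕ, p n * x ^ n) = ∑' z : ℕ × ℕ, g z :=
    Summable.tsum_mul_tsum (summable_npxn H hay) (summable_pxn H hax) hg
  rw [hfeq, hgeq]
  linarith

lemma BA_swap (H : Hyp q p) {x y : ℝ} (hx : 0 ≤ x) (hxy : x ≤ y) (hy : y ≤ 1) :
    Bf p x * Af q p y ≤ Bf p y * Af q p x := by
  have h1 := BA_core H hx hxy hy
  have h2 := Bf_mono H hx hxy hy
  rw [Af, Af]
  nlinarith [H.hq]

lemma Df_strict (H : Hyp q p) {x y : ℝ} (hx : 0 < x) (hxy : x < y) (hy : y < 1) :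
    Df q p x < Df q p y := by
  have hy0 : 0 < y := hx.trans hxy
  have hAx : 0 < Af q p x := Af_pos H x hx.le
  have hAy : 0 < Af q p y := Af_pos H y hy0.le
  have hφx : 0 < phi q p x := phi_pos H hx.le
  have hφy : 0 < phi q p y := phi_pos H hy0.le
  have hBx : 0 < Bf p x := Bf_pos H hx (by linarith)
  have hBy : 0 < Bf p y := Bf_pos H hy0 hy.le
  have hc1 : 0 < q - x * Bf p x := qxB_pos H hx.le (by linarith)
  have hc2 : 0 < q - y * Bf p y := qxB_pos H hy0.le hy
  have hc21 : q - y * Bf p y < q - x * Bf p x := by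
    have h1 : x * Bf p x < y * Bf p x := by
      exact mul_lt_mul_of_pos_right hxy hBx
    have h2 : y * Bf p x ≤ y * Bf p y :=
      mul_le_mul_of_nonneg_left (Bf_mono H hx.le hxy.le hy.le) hy0.le
    linarith
  have hu : phi q p x * Bf p x / Af q p x ≤ phi q p y * Bf p y / Af q p y := by
    rw [div_le_div_iff₀ hAx hAy]
    have h1 := BA_swap H hx.le hxy.le hy.le
    have h2 := phi_mono H hx.le hxy.le hy.le
    nlinarith [hφx.le, mul_nonneg hBy.le hAx.le]
  have hu1 : 0 < phi q p x * Bf p x / Af q p x := div_pos (mul_pos hφx hBx) hAx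
  have hstep : phi q p x * Bf p x / Af q p x / (q - x * Bf p x)
      < phi q p y * Bf p y / Af q p y / (q - y * Bf p y) := by
    calc phi q p x * Bf p x / Af q p x / (q - x * Bf p x)
        < phi q p x * Bf p x / Af q p x / (q - y * Bf p y) :=
          div_lt_div_of_pos_left hu1 hc2 hc21
    _ ≤ phi q p y * Bf p y / Af q p y / (q - y * Bf p y) := by gcongr
  have e1 : phi q p x * Bf p x / (Af q p x * (q - x * Bf p x))
      = phi q p x * Bf p x / Af q p x / (q - x * Bf p x) := by
    rw [div_div]
  have e2 : phi q p y * Bf p y / (Af q p y * (q - y * Bf p y))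
      = phi q p y * Bf p y / Af q p y / (q - y * Bf p y) := by
    rw [div_div]
  rw [Df, Df, e1, e2]
  linarith


lemma h_le (H : Hyp q p) (hmin : IsMinimalSolution (phi q p) h) {s : ℝ}
    (hs0 : 0 < s) (hs1 : s ≤ 1) : h s ≤ s := by
  have hm := h_icc hmin hs0.le hs1
  calc h s = s * phi q p (h s) := h_fix hmin hs0.le hs1
  _ ≤ s * 1 := mul_le_mul_of_nonneg_left (phi_le_one H hm.1 hm.2) hs0.le
  _ = s := mul_one s

lemma Df_ge_one (H : Hyp q p) {x : ℝ} (hx : 0 < x) (hx1 : x < 1) : 1 ≤ Df q p x := by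
  rw [Df]
  have h1 : 0 ≤ phi q p x * Bf p x :=
    mul_nonneg (phi_pos H hx.le).le (Bf_nonneg H x hx.le)
  have h2 : 0 < Af q p x * (q - x * Bf p x) :=
    mul_pos (Af_pos H x hx.le) (qxB_pos H hx.le hx1)
  nlinarith [div_nonneg h1 h2.le]

lemma Df_le (H : Hyp q p) {x : ℝ} (hx : 0 < x) (hx2 : x ≤ 1/2) : Df q p x ≤ 1 + 2 * x / q := by
  have hq := H.hq
  have hx1 : x < 1 := by linarith
  have hφ1 : phi q p x ≤ 1 := phi_le_one H hx.le hx1.le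
  have hB : Bf p x ≤ q * x := Bf_le_qx H hx.le hx1.le
  have hB0 : 0 ≤ Bf p x := Bf_nonneg H x hx.le
  have hφ0 : 0 < phi q p x := phi_pos H hx.le
  have hAq : q ≤ Af q p x := Af_ge H x hx.le
  have hnum : phi q p x * Bf p x ≤ q * x := by nlinarith
  have hden : q * (q / 2) ≤ Af q p x * (q - x * Bf p x) := by
    have h3 : q - x * Bf p x ≥ q - x * (q * x) := by nlinarith
    have h4 : q - x * (q * x) ≥ q / 2 := by nlinarith [sq_nonneg x]
    nlinarith [qxB_pos H hx.le hx1]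
  have h5 : phi q p x * Bf p x / (Af q p x * (q - x * Bf p x)) ≤ (q * x) / (q * (q / 2)) := by
    apply div_le_div₀ (by positivity) hnum (by positivity) hden
  have h6 : (q * x) / (q * (q / 2)) = 2 * x / q := by
    field_simp
  rw [Df]
  rw [h6] at h5
  linarith

lemma tendsto_atBot_deriv (H : Hyp q p) (hmin : IsMinimalSolution (phi q p) h) :
    Tendsto (deriv (LambdaR q h)) atBot (𝓝 1) := by
  have hq := H.hq
  have hupper : Tendsto (fun l : ℝ => 1 + 2 * Real.exp l / q) atBot (𝓝 1) := by
    have h1 : Tendsto (fun l : ℝ => 2 * Real.exp l / q) atBot (𝓝 0) := by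
      have h2 := Real.tendsto_exp_atBot
      have h3 := h2.const_mul (2:ℝ)
      have h4 := h3.div_const q
      simpa using h4
    have := h1.const_add (1:ℝ)
    simpa using this
  apply tendsto_of_tendsto_of_tendsto_of_le_of_le' (tendsto_const_nhds) hupper
  · filter_upwards [eventually_le_atBot (-1 : ℝ)] with l hl
    have hl0 : l < 0 := by linarith
    have hs0 : 0 < Real.exp l := Real.exp_pos l
    have hs1 : Real.exp l < 1 := Real.exp_lt_one_iff.mpr hl0
    rw [deriv_LambdaR H hmin hl0]
    exact Df_ge_one H (h_pos H hmin hs0 hs1.le) (h_lt_one H hmin hs0 hs1)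
  · filter_upwards [eventually_le_atBot (-1 : ℝ)] with l hl
    have hl0 : l < 0 := by linarith
    have hs0 : 0 < Real.exp l := Real.exp_pos l
    have hs1 : Real.exp l < 1 := Real.exp_lt_one_iff.mpr hl0
    have hs_half : Real.exp l ≤ 1/2 := by
      have h1 : Real.exp l ≤ Real.exp (-1) := Real.exp_le_exp.mpr hl
      have h2 : Real.exp (-1) = 1 / Real.exp 1 := by
        rw [Real.exp_neg]; ring
      have h3 : (2:ℝ) ≤ Real.exp 1 := by
        have := Real.exp_one_gt_d9
        linarith
      have h4 : 1 / Real.exp 1 ≤ 1 / 2 := by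
        apply one_div_le_one_div_of_le <;> linarith
      linarith
    set x := h (Real.exp l) with hxdef
    have hx0 : 0 < x := h_pos H hmin hs0 hs1.le
    have hxe : x ≤ Real.exp l := h_le H hmin hs0 hs1.le
    rw [deriv_LambdaR H hmin hl0]
    calc Df q p x ≤ 1 + 2 * x / q := Df_le H hx0 (by linarith)
    _ ≤ 1 + 2 * Real.exp l / q := by gcongr

lemma xB_near_q (H : Hyp q p) {ε : ℝ} (hε : 0 < ε) :
    ∃ x₁ : ℝ, 1/2 ≤ x₁ ∧ x₁ < 1 ∧ q - x₁ * Bf p x₁ < ε := by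
  -- partial sums of ∑ n p_n converge to q
  have hps := (summable_npn H).hasSum.tendsto_sum_nat
  rw [tsum_npn H] at hps
  have hev : ∀ᶠ N in atTop, q - ε/2 < ∑ i ∈ Finset.range N, (i:ℝ) * p i := by
    have := hps.eventually (eventually_gt_nhds (by linarith : q - ε/2 < q))
    exact this
  obtain ⟨N, hN⟩ := hev.exists
  set S := ∑ i ∈ Finset.range N, (i:ℝ) * p i with hSdef
  set Fc : ℝ → ℝ := fun x => x * ∑ i ∈ Finset.range N, (i:ℝ) * p i * x ^ i with hFdef
  have hFcont : Continuous Fc := by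
    apply continuous_id.mul
    apply continuous_finset_sum
    intro i _
    exact continuous_const.mul (continuous_pow i)
  have hF1 : Fc 1 = S := by
    simp [hFdef, hSdef]
  -- approach 1 along 1 - 1/k
  have hseq : Tendsto (fun k : ℕ => (1 : ℝ) - 1 / k) atTop (𝓝 1) := by
    have := tendsto_one_div_atTop_nhds_zero_nat (𝕜 := ℝ)
    have h2 := tendsto_const_nhds (x := (1:ℝ)) (f := atTop (α := ℕ)) |>.sub this
    simpa using h2
  have hFseq : Tendsto (fun k : ℕ => Fc (1 - 1/k)) atTop (𝓝 S) := by
    rw [← hF1]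
    exact (hFcont.continuousAt).tendsto.comp hseq
  have hev2 : ∀ᶠ k : ℕ in atTop, q - ε < Fc (1 - 1/k) := by
    apply hFseq.eventually (eventually_gt_nhds ?_)
    linarith
  have hev3 : ∀ᶠ k : ℕ in atTop, (2:ℕ) ≤ k := eventually_ge_atTop 2
  obtain ⟨k, hk1, hk2⟩ := (hev2.and hev3).exists
  have hk2' : (2:ℝ) ≤ (k:ℝ) := by exact_mod_cast hk2
  set x₁ : ℝ := 1 - 1/(k:ℝ) with hx₁def
  have hkinv : 0 < 1/(k:ℝ) := by positivity
  have hkinv2 : 1/(k:ℝ) ≤ 1/2 := by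
    apply one_div_le_one_div_of_le <;> linarith
  refine ⟨x₁, by rw [hx₁def]; linarith, by rw [hx₁def]; linarith, ?_⟩
  have hx₁0 : 0 ≤ x₁ := by rw [hx₁def]; linarith
  have hx₁1 : x₁ ≤ 1 := by rw [hx₁def]; linarith
  have hax : |x₁| ≤ 1 := by rw [abs_of_nonneg hx₁0]; linarith
  have hBsum : ∑ i ∈ Finset.range N, (i:ℝ) * p i * x₁ ^ i ≤ Bf p x₁ := by
    apply Summable.sum_le_tsum (Finset.range N) ?_ (summable_npxn H hax)
    intro i _
    exact mul_nonneg (mul_nonneg (Nat.cast_nonneg i) (H.hp i)) (pow_nonneg hx₁0 i)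
  have hFle : Fc x₁ ≤ x₁ * Bf p x₁ := by
    rw [hFdef]
    exact mul_le_mul_of_nonneg_left hBsum hx₁0
  have := hk1
  linarith


lemma tendsto_atTop_deriv (H : Hyp q p) (hmin : IsMinimalSolution (phi q p) h) :
    Tendsto (deriv (LambdaR q h)) (𝓝[<] (0:ℝ)) atTop := by
  rw [tendsto_atTop]
  intro C
  have hq := H.hq
  have hb : 0 < Bf p (1/2) := Bf_pos H (by norm_num) (by norm_num)
  set b := Bf p (1/2) with hbdef
  set C' := max C 1 with hC'
  have hC'0 : (0:ℝ) < C' := lt_of_lt_of_le one_pos (le_max_right _ _)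
  set ε := q * b / C' with hεdef
  have hε0 : 0 < ε := by positivity
  obtain ⟨x₁, hx₁h, hx₁1, hx₁ε⟩ := xB_near_q H hε0
  have hx₁0 : 0 < x₁ := by linarith
  set s₁ := psi q p x₁ with hs₁def
  have hs₁1 : s₁ < 1 := by
    have := psi_strict H hx₁0 hx₁1 le_rfl
    rwa [psi_one H] at this
  have hs₁0 : 0 < s₁ := div_pos hx₁0 (phi_pos H hx₁0.le)
  have hL : Real.log s₁ < 0 := Real.log_neg hs₁0 hs₁1
  filter_upwards [Ioo_mem_nhdsLT_of_mem (⟨hL, le_rfl⟩ : (0:ℝ) ∈ Set.Ioc (Real.log s₁) 0)]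
    with l hl
  have hl0 : l < 0 := hl.2
  have hs0 : (0:ℝ) < Real.exp l := Real.exp_pos l
  have hs1 : Real.exp l < 1 := Real.exp_lt_one_iff.mpr hl0
  have hsl : s₁ < Real.exp l := by
    have h2 := Real.exp_lt_exp.mpr hl.1
    rwa [Real.exp_log hs₁0] at h2
  set x := h (Real.exp l) with hxdef
  have hx0 : 0 < x := h_pos H hmin hs0 hs1.le
  have hxlt1 : x < 1 := h_lt_one H hmin hs0 hs1
  have hxx₁ : x₁ < x := by
    by_contra hc
    push_neg at hc
    have h3 := psi_mono H hx0 hc hx₁1.le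
    rw [psi_h H hmin hs0 hs1.le] at h3
    rw [hs₁def] at hsl
    linarith
  have hφ : q ≤ phi q p x := phi_ge H hx0.le
  have hB : b ≤ Bf p x := by
    rw [hbdef]
    exact Bf_mono H (by norm_num) (by linarith) hxlt1.le
  have hA1 : Af q p x ≤ 1 := Af_le_one H hx0.le hxlt1.le
  have hA0 : 0 < Af q p x := Af_pos H x hx0.le
  have hqx : 0 < q - x * Bf p x := qxB_pos H hx0.le hxlt1
  have hmono : x₁ * Bf p x₁ ≤ x * Bf p x := by
    have h1 : x₁ * Bf p x₁ ≤ x * Bf p x₁ :=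
      mul_le_mul_of_nonneg_right hxx₁.le (Bf_nonneg H x₁ hx₁0.le)
    have h2 : x * Bf p x₁ ≤ x * Bf p x :=
      mul_le_mul_of_nonneg_left (Bf_mono H hx₁0.le hxx₁.le hxlt1.le) hx0.le
    linarith
  have hden : Af q p x * (q - x * Bf p x) ≤ ε := by
    have h1 : q - x * Bf p x ≤ q - x₁ * Bf p x₁ := by linarith
    nlinarith [hqx]
  have hnum : q * b ≤ phi q p x * Bf p x := by
    nlinarith [Bf_nonneg H x hx0.le]
  have hdiv : q * b / ε ≤ phi q p x * Bf p x / (Af q p x * (q - x * Bf p x)) :=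
    div_le_div₀ (mul_nonneg (phi_pos H hx0.le).le (Bf_nonneg H x hx0.le)) hnum
      (mul_pos hA0 hqx) hden
  have hqbε : q * b / ε = C' := by
    rw [hεdef]
    field_simp
  rw [deriv_LambdaR H hmin hl0, Df]
  have hCC : C ≤ C' := le_max_left _ _
  rw [hqbε] at hdiv
  linarith

lemma strictMonoOn_deriv (H : Hyp q p) (hmin : IsMinimalSolution (phi q p) h) :
    StrictMonoOn (deriv (LambdaR q h)) (Set.Iio (0:ℝ)) := by
  intro a ha b hb hab
  have ha0 : a < 0 := ha
  have hb0 : b < 0 := hb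
  rw [deriv_LambdaR H hmin ha0, deriv_LambdaR H hmin hb0]
  have hea : (0:ℝ) < Real.exp a := Real.exp_pos a
  have heb : (0:ℝ) < Real.exp b := Real.exp_pos b
  have hea1 : Real.exp a < 1 := Real.exp_lt_one_iff.mpr ha0
  have heb1 : Real.exp b < 1 := Real.exp_lt_one_iff.mpr hb0
  exact Df_strict H (h_pos H hmin hea hea1.le)
    (h_strict H hmin hea (Real.exp_lt_exp.mpr hab) heb1.le)
    (h_lt_one H hmin heb heb1)

end LamAux

/-- Lemma 5 for `Λ_r`: it is differentiable on `(−∞,0)`, its derivative is strictly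
increasing there, and `Λ_r'(λ) → 1` as `λ → −∞` while `Λ_r'(λ) → +∞` as `λ → 0−`. -/
theorem lambdaR_deriv_monotone_limits
    (q : ℝ) (p : ℕ → ℝ) (hq : 0 < q) (hp : ∀ n, 0 ≤ p n)
    (hpsum : Summable p) (htotal : q + ∑' n : ℕ, p n = 1) (hp0 : p 0 < 1)
    (hmoment : Summable (fun n : ℕ => (n + 1 : ℝ) * p n))
    (hcrit : ∑' n : ℕ, (n + 1 : ℝ) * p n = 1)
    (h : ℝ → ℝ) (hmin : IsMinimalSolution (phi q p) h)
:
    DifferentiableOn ℝ (LambdaR q h) (Set.Iio 0) ∧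
    StrictMonoOn (deriv (LambdaR q h)) (Set.Iio 0) ∧
    Tendsto (deriv (LambdaR q h)) atBot (𝓝 1) ∧
    Tendsto (deriv (LambdaR q h)) (𝓝[<] (0 : ℝ)) atTop := by
  have H : LamAux.Hyp q p := ⟨hq, hp, hpsum, htotal, hp0, hmoment, hcrit⟩
  refine ⟨?_, LamAux.strictMonoOn_deriv H hmin, LamAux.tendsto_atBot_deriv H hmin,
    LamAux.tendsto_atTop_deriv H hmin⟩
  intro l hl
  exact (LamAux.hasDerivAt_LambdaR H hmin hl).differentiableAt.differentiableWithinAt
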